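/- Let α, β be irrational with α ± β ∉ ℤ, with convergent denominators q_n and t_m respectively. Then there exist only finitely many pairs of indices (n, m) such that simultaneously q_n = t_m and q_{n+1} = t_{m+1}. -/

import Mathlib

lemma my_irr_iter {u : ℕ → ℝ} (hx : Irrational (u 0))
    (hu : ∀ r, u (r + 1) = (u r - (⌊u r⌋ : ℝ))⁻¹) :
    ∀ r, Irrational (u r) := by
  intro r
  induction r with
  | zero => exact hx
  | succ n ih => rw [hu n]; exact (ih.sub_intCast _).inv

lemma my_gt_one {u : ℕ → ℝ} (hx : Irrational (u 0))
    (hu : ∀ r, u (r + 1) = (u r - (⌊u r⌋ : ℝ))⁻¹) :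
    ∀ r, 1 < u (r + 1) := by
  intro r
  have hirr := my_irr_iter hx hu r
  have hne : u r ≠ (⌊u r⌋ : ℝ) := hirr.ne_int _
  have hle := Int.floor_le (u r)
  have h0 : (0:ℝ) < u r - ⌊u r⌋ := by
    rcases lt_or_eq_of_le hle with h | h
    · linarith
    · exact absurd h.symm hne
  have h1 : u r - ⌊u r⌋ < 1 := by
    have := Int.lt_floor_add_one (u r); linarith
  rw [hu r]
  exact one_lt_inv₀ h0 |>.mpr h1

lemma my_u_eq {u : ℕ → ℝ} (hx : Irrational (u 0))
    (hu : ∀ r, u (r + 1) = (u r - (⌊u r⌋ : ℝ))⁻¹) :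
    ∀ r, u r = (⌊u r⌋ : ℝ) + (u (r + 1))⁻¹ := by
  intro r
  have hne : u r - (⌊u r⌋:ℝ) ≠ 0 := sub_ne_zero.mpr ((my_irr_iter hx hu r).ne_int _)
  rw [hu r, inv_inv]; ring

lemma my_q_pos {a q : ℕ → ℤ} (ha : ∀ r, 1 ≤ a (r+1)) (hq0 : q 0 = 1) (hq1 : q 1 = a 1)
    (hqrec : ∀ k, q (k+2) = a (k+2) * q (k+1) + q k) : ∀ n, 1 ≤ q n := by
  intro n
  induction n using Nat.twoStepInduction with
  | zero => omega
  | one => rw [hq1]; exact ha 0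
  | more k ih1 ih2 => rw [hqrec k]; nlinarith [ha (k+1)]

lemma my_q_lt {a q : ℕ → ℤ} (ha : ∀ r, 1 ≤ a (r+1)) (hq0 : q 0 = 1) (hq1 : q 1 = a 1)
    (hqrec : ∀ k, q (k+2) = a (k+2) * q (k+1) + q k) : ∀ n, q (n+1) < q (n+2) := by
  intro n
  have qp := my_q_pos ha hq0 hq1 hqrec
  rw [hqrec n]; nlinarith [ha (n+1), qp n, qp (n+1)]

lemma my_q_ge {a q : ℕ → ℤ} (ha : ∀ r, 1 ≤ a (r+1)) (hq0 : q 0 = 1) (hq1 : q 1 = a 1)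
    (hqrec : ∀ k, q (k+2) = a (k+2) * q (k+1) + q k) : ∀ n : ℕ, (n : ℤ) ≤ q n := by
  intro n
  have qp := my_q_pos ha hq0 hq1 hqrec
  induction n using Nat.twoStepInduction with
  | zero => simp [hq0]
  | one => simpa using qp 1
  | more k ih1 ih2 =>
    rw [hqrec k]; push_cast
    push_cast at ih2
    nlinarith [ha (k+1), qp k, qp (k+1)]


lemma my_step (x y x' y' : ℝ) (hx : Irrational x) (hy : Irrational y)
    (hx' : x' = (x - (⌊x⌋:ℝ))⁻¹) (hy' : y' = (y - (⌊y⌋:ℝ))⁻¹)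
    (hfl : ⌊x⌋ = ⌊y⌋) (h1 : 1 < x') (h2 : 1 < y') :
    |x - y| = |x' - y'| / (x' * y') := by
  have hxne : x - (⌊x⌋:ℝ) ≠ 0 := sub_ne_zero.mpr (hx.ne_int _)
  have hyne : y - (⌊y⌋:ℝ) ≠ 0 := sub_ne_zero.mpr (hy.ne_int _)
  have hx'pos : (0:ℝ) < x' := by linarith
  have hy'pos : (0:ℝ) < y' := by linarith
  have e1 : x = (⌊x⌋:ℝ) + x'⁻¹ := by rw [hx', inv_inv]; ring
  have e2 : y = (⌊y⌋:ℝ) + y'⁻¹ := by rw [hy', inv_inv]; ring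
  have e3 : x - y = (y' - x') / (x' * y') := by
    rw [e1, e2, hfl]
    field_simp
    ring
  rw [e3, abs_div, abs_of_pos (mul_pos hx'pos hy'pos), abs_sub_comm]

lemma my_cf_unique : ∀ (n : ℕ) (u v : ℕ → ℝ),
    (∀ r, u (r + 1) = (u r - (⌊u r⌋ : ℝ))⁻¹) →
    (∀ r, v (r + 1) = (v r - (⌊v r⌋ : ℝ))⁻¹) →
    Irrational (u 0) → Irrational (v 0) →
    (∀ r, 1 < u r) → (∀ r, 1 < v r) →
    (∀ r, ⌊u r⌋ = ⌊v r⌋) →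
    |u 0 - v 0| ≤ (1/2 : ℝ) ^ n := by
  intro n
  induction n with
  | zero =>
    intro u v hu hv hiu hiv h1u h1v hfl
    have a1 := Int.floor_le (u 0)
    have a2 := Int.lt_floor_add_one (u 0)
    have b1 := Int.floor_le (v 0)
    have b2 := Int.lt_floor_add_one (v 0)
    have hc : ((⌊u 0⌋ : ℤ) : ℝ) = ((⌊v 0⌋ : ℤ) : ℝ) := by rw [hfl 0]
    simp only [pow_zero]
    rw [abs_le]
    constructor <;> linarith
  | succ n ih =>
    intro u v hu hv hiu hiv h1u h1v hfl
    have hiu' := my_irr_iter hiu hu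
    have hiv' := my_irr_iter hiv hv
    have s1 : |u 0 - v 0| = |u 1 - v 1| / (u 1 * v 1) :=
      my_step _ _ _ _ (hiu' 0) (hiv' 0) (hu 0) (hv 0) (hfl 0) (h1u 1) (h1v 1)
    have s2 : |u 1 - v 1| = |u 2 - v 2| / (u 2 * v 2) :=
      my_step _ _ _ _ (hiu' 1) (hiv' 1) (hu 1) (hv 1) (hfl 1) (h1u 2) (h1v 2)
    have ihe : |u 2 - v 2| ≤ (1/2:ℝ)^n :=
      ih (fun r => u (r+2)) (fun r => v (r+2)) (fun r => hu (r+2)) (fun r => hv (r+2))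
        (hiu' 2) (hiv' 2) (fun r => h1u (r+2)) (fun r => h1v (r+2)) (fun r => hfl (r+2))
    have e1 : u 1 = (⌊u 1⌋:ℝ) + (u 2)⁻¹ := my_u_eq hiu hu 1
    have e2 : v 1 = (⌊v 1⌋:ℝ) + (v 2)⁻¹ := my_u_eq hiv hv 1
    have f1 : (1:ℝ) ≤ (⌊u 1⌋:ℝ) := by
      have : (1:ℤ) ≤ ⌊u 1⌋ := Int.le_floor.mpr (by exact_mod_cast (h1u 1).le)
      exact_mod_cast this
    have f2 : (1:ℝ) ≤ (⌊v 1⌋:ℝ) := by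
      have : (1:ℤ) ≤ ⌊v 1⌋ := Int.le_floor.mpr (by exact_mod_cast (h1v 1).le)
      exact_mod_cast this
    have hu2 : (1:ℝ) < u 2 := h1u 2
    have hv2 : (1:ℝ) < v 2 := h1v 2
    have hu2ne : u 2 ≠ 0 := by linarith
    have hv2ne : v 2 ≠ 0 := by linarith
    have p1 : (2:ℝ) < u 1 * u 2 := by
      have : u 1 * u 2 = (⌊u 1⌋:ℝ) * u 2 + 1 := by
        conv_lhs => rw [e1]
        rw [add_mul, inv_mul_cancel₀ hu2ne]
      nlinarith
    have p2 : (2:ℝ) < v 1 * v 2 := by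
      have : v 1 * v 2 = (⌊v 1⌋:ℝ) * v 2 + 1 := by
        conv_lhs => rw [e2]
        rw [add_mul, inv_mul_cancel₀ hv2ne]
      nlinarith
    have hden : (4:ℝ) ≤ (u 2 * v 2) * (u 1 * v 1) := by nlinarith [p1, p2]
    calc |u 0 - v 0| = |u 2 - v 2| / ((u 2 * v 2) * (u 1 * v 1)) := by
          rw [s1, s2, div_div]
      _ ≤ (1/2:ℝ)^n / 4 := div_le_div₀ (by positivity) ihe (by norm_num) hden
      _ ≤ (1/2:ℝ)^(n+1) := by
          rw [pow_succ]
          nlinarith [pow_nonneg (by norm_num : (0:ℝ) ≤ 1/2) n]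


lemma my_descent {aα q aβ t : ℕ → ℤ}
    (haα1 : ∀ r, 1 ≤ aα (r + 1))
    (hq0 : q 0 = 1) (hq1 : q 1 = aα 1)
    (hqrec : ∀ k, q (k + 2) = aα (k + 2) * q (k + 1) + q k)
    (haβ1 : ∀ r, 1 ≤ aβ (r + 1))
    (ht0 : t 0 = 1) (ht1 : t 1 = aβ 1)
    (htrec : ∀ k, t (k + 2) = aβ (k + 2) * t (k + 1) + t k)
    (n m : ℕ) (h1 : q (n + 2) = t (m + 2)) (h2 : q (n + 3) = t (m + 3)) :
    q (n + 1) = t (m + 1) := by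
  have qp := my_q_pos haα1 hq0 hq1 hqrec
  have tp := my_q_pos haβ1 ht0 ht1 htrec
  have b1 : q (n + 1) < q (n + 2) := my_q_lt haα1 hq0 hq1 hqrec n
  have b2 : t (m + 1) < t (m + 2) := my_q_lt haβ1 ht0 ht1 htrec m
  have e1 := hqrec (n + 1)
  have e2 := htrec (m + 1)
  have key : (aα (n + 3) - aβ (m + 3)) * q (n + 2) = t (m + 1) - q (n + 1) := by
    linear_combination -e1 + h2 + e2 - aβ (m + 3) * h1
  have hQ1 : 1 ≤ q (n + 1) := qp _
  have hT1 : 1 ≤ t (m + 1) := tp _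
  have hQpos : (0:ℤ) ≤ q (n + 2) := by linarith
  have hD : aα (n + 3) - aβ (m + 3) = 0 := by
    by_contra hD
    rcases lt_or_gt_of_ne hD with h | h
    · have h' : aα (n + 3) - aβ (m + 3) ≤ -1 := by omega
      have := mul_le_mul_of_nonneg_right h' hQpos
      rw [neg_one_mul] at this
      linarith
    · have h' : (1:ℤ) ≤ aα (n + 3) - aβ (m + 3) := h
      have := mul_le_mul_of_nonneg_right h' hQpos
      rw [one_mul] at this
      have hb2' : t (m + 1) < q (n + 2) := by rw [h1]; exact b2
      linarith
  rw [hD, zero_mul] at key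
  omega

lemma my_base {aα q aβ t : ℕ → ℤ}
    (haα1 : ∀ r, 1 ≤ aα (r + 1))
    (hq0 : q 0 = 1) (hq1 : q 1 = aα 1)
    (hqrec : ∀ k, q (k + 2) = aα (k + 2) * q (k + 1) + q k)
    (haβ1 : ∀ r, 1 ≤ aβ (r + 1))
    (ht0 : t 0 = 1) (ht1 : t 1 = aβ 1)
    (htrec : ∀ k, t (k + 2) = aβ (k + 2) * t (k + 1) + t k)
    (f : ℕ) (h1 : q 1 = t (f + 3)) (h2 : q 2 = t (f + 4)) : False := by
  have tp := my_q_pos haβ1 ht0 ht1 htrec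
  have e1 := hqrec 0
  have e2 := htrec (f + 2)
  have h2ge : 2 ≤ t (f + 2) := by
    have := htrec f
    nlinarith [haβ1 (f + 1), tp (f + 1), tp f]
  have hlt : t (f + 2) < t (f + 3) := my_q_lt haβ1 ht0 ht1 htrec (f + 1)
  have key : (aα 2 - aβ (f + 4)) * t (f + 3) = t (f + 2) - 1 := by
    linear_combination -e1 - aα 2 * h1 + h2 + e2 - hq0
  have hT3 : (0:ℤ) ≤ t (f + 3) := by linarith [tp (f + 3)]
  rcases le_or_gt (aα 2 - aβ (f + 4)) 0 with h | h
  · have := mul_le_mul_of_nonneg_right h hT3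
    rw [zero_mul] at this
    linarith
  · have h' : (1:ℤ) ≤ aα 2 - aβ (f + 4) := h
    have := mul_le_mul_of_nonneg_right h' hT3
    rw [one_mul] at this
    linarith

lemma my_chain {aα q aβ t : ℕ → ℤ}
    (haα1 : ∀ r, 1 ≤ aα (r + 1))
    (hq0 : q 0 = 1) (hq1 : q 1 = aα 1)
    (hqrec : ∀ k, q (k + 2) = aα (k + 2) * q (k + 1) + q k)
    (haβ1 : ∀ r, 1 ≤ aβ (r + 1))
    (ht0 : t 0 = 1) (ht1 : t 1 = aβ 1)
    (htrec : ∀ k, t (k + 2) = aβ (k + 2) * t (k + 1) + t k) :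
    ∀ (k n m : ℕ), 1 ≤ n → 1 ≤ m → q (n + k) = t (m + k) → q (n + k + 1) = t (m + k + 1) →
      q n = t m ∧ q (n + 1) = t (m + 1) := by
  intro k
  induction k with
  | zero => intro n m _ _ h1 h2; exact ⟨h1, h2⟩
  | succ k ih =>
    intro n m hn hm h1 h2
    apply ih n m hn hm
    · obtain ⟨n', rfl⟩ : ∃ n', n = n' + 1 := ⟨n - 1, by omega⟩
      obtain ⟨m', rfl⟩ : ∃ m', m = m' + 1 := ⟨m - 1, by omega⟩
      have h1' : q (n' + k + 2) = t (m' + k + 2) := by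
        rw [show n' + k + 2 = n' + 1 + (k + 1) from by omega,
            show m' + k + 2 = m' + 1 + (k + 1) from by omega]
        exact h1
      have h2' : q (n' + k + 3) = t (m' + k + 3) := by
        rw [show n' + k + 3 = n' + 1 + (k + 1) + 1 from by omega,
            show m' + k + 3 = m' + 1 + (k + 1) + 1 from by omega]
        exact h2
      have := my_descent haα1 hq0 hq1 hqrec haβ1 ht0 ht1 htrec (n' + k) (m' + k) h1' h2'
      rw [show n' + 1 + k = n' + k + 1 from by omega, show m' + 1 + k = m' + k + 1 from by omega]
      exact this
    · exact h1
lemma my_caseA (α β : ℝ) (hα : Irrational α) (hβ : Irrational β)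
    (tlα : ℕ → ℝ) (aα : ℕ → ℤ) (q : ℕ → ℤ)
    (htlα0 : tlα 0 = α)
    (htlα : ∀ r, tlα (r + 1) = (tlα r - (⌊tlα r⌋ : ℝ))⁻¹)
    (haα : ∀ r, aα r = ⌊tlα r⌋)
    (hq0 : q 0 = 1) (hq1 : q 1 = aα 1)
    (hqrec : ∀ k, q (k + 2) = aα (k + 2) * q (k + 1) + q k)
    (tlβ : ℕ → ℝ) (aβ : ℕ → ℤ) (t : ℕ → ℤ)
    (htlβ0 : tlβ 0 = β)
    (htlβ : ∀ r, tlβ (r + 1) = (tlβ r - (⌊tlβ r⌋ : ℝ))⁻¹)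
    (haβ : ∀ r, aβ r = ⌊tlβ r⌋)
    (ht0 : t 0 = 1) (ht1 : t 1 = aβ 1)
    (htrec : ∀ k, t (k + 2) = aβ (k + 2) * t (k + 1) + t k)
    (h : ∀ i, q (i + 1) = t (i + 1)) :
    ∃ k : ℤ, α - β = (k : ℝ) := by
  have hαi : Irrational (tlα 0) := by rw [htlα0]; exact hα
  have hβi : Irrational (tlβ 0) := by rw [htlβ0]; exact hβ
  have haα1 : ∀ r, 1 ≤ aα (r + 1) := by
    intro r; rw [haα]; exact Int.le_floor.mpr (by exact_mod_cast (my_gt_one hαi htlα r).le)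
  have qp := my_q_pos haα1 hq0 hq1 hqrec
  have hq_eq : ∀ i, q i = t i := by
    intro i
    cases i with
    | zero => rw [hq0, ht0]
    | succ j => exact h j
  have habs : ∀ i, aα (i + 1) = aβ (i + 1) := by
    intro i
    cases i with
    | zero => have := h 0; rw [hq1, ht1] at this; exact this
    | succ j =>
      show aα (j + 2) = aβ (j + 2)
      have e1 := hqrec j
      have e2 := htrec j
      have k1 := hq_eq j
      have k2 := hq_eq (j + 1)
      have k3 := hq_eq (j + 2)
      have key : (aα (j + 2) - aβ (j + 2)) * q (j + 1) = 0 := by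
        linear_combination -e1 + e2 + k3 - k1 - aβ (j + 2) * k2
      have := qp (j + 1)
      rcases mul_eq_zero.mp key with h' | h' <;> omega
  have hfl : ∀ r, ⌊tlα (r + 1)⌋ = ⌊tlβ (r + 1)⌋ := by
    intro r; rw [← haα, ← haβ]; exact habs r
  have heq : tlα 1 = tlβ 1 := by
    by_contra hne
    have hpos : 0 < |tlα 1 - tlβ 1| := abs_pos.mpr (sub_ne_zero.mpr hne)
    obtain ⟨n, hn⟩ := exists_pow_lt_of_lt_one hpos (by norm_num : (1/2:ℝ) < 1)
    have hb := my_cf_unique n (fun r => tlα (r + 1)) (fun r => tlβ (r + 1))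
      (fun r => htlα (r + 1)) (fun r => htlβ (r + 1))
      (my_irr_iter hαi htlα 1) (my_irr_iter hβi htlβ 1)
      (fun r => my_gt_one hαi htlα r) (fun r => my_gt_one hβi htlβ r) hfl
    exact absurd hb (not_le.mpr hn)
  refine ⟨aα 0 - aβ 0, ?_⟩
  have eα : tlα 0 = (⌊tlα 0⌋ : ℝ) + (tlα 1)⁻¹ := my_u_eq hαi htlα 0
  have eβ : tlβ 0 = (⌊tlβ 0⌋ : ℝ) + (tlβ 1)⁻¹ := my_u_eq hβi htlβ 0
  have ca : ((aα 0 : ℤ) : ℝ) = (⌊tlα 0⌋ : ℝ) := by rw [haα 0]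
  have cb : ((aβ 0 : ℤ) : ℝ) = (⌊tlβ 0⌋ : ℝ) := by rw [haβ 0]
  have hinv : (tlα 1)⁻¹ = (tlβ 1)⁻¹ := by rw [heq]
  rw [← htlα0, ← htlβ0, eα, eβ]
  push_cast
  linarith [ca, cb, hinv]
lemma my_caseB (α β : ℝ) (hα : Irrational α) (hβ : Irrational β)
    (tlα : ℕ → ℝ) (aα : ℕ → ℤ) (q : ℕ → ℤ)
    (htlα0 : tlα 0 = α)
    (htlα : ∀ r, tlα (r + 1) = (tlα r - (⌊tlα r⌋ : ℝ))⁻¹)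
    (haα : ∀ r, aα r = ⌊tlα r⌋)
    (hq0 : q 0 = 1) (hq1 : q 1 = aα 1)
    (hqrec : ∀ k, q (k + 2) = aα (k + 2) * q (k + 1) + q k)
    (tlβ : ℕ → ℝ) (aβ : ℕ → ℤ) (t : ℕ → ℤ)
    (htlβ0 : tlβ 0 = β)
    (htlβ : ∀ r, tlβ (r + 1) = (tlβ r - (⌊tlβ r⌋ : ℝ))⁻¹)
    (haβ : ∀ r, aβ r = ⌊tlβ r⌋)
    (ht0 : t 0 = 1) (ht1 : t 1 = aβ 1)
    (htrec : ∀ k, t (k + 2) = aβ (k + 2) * t (k + 1) + t k)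
    (h : ∀ i, q (i + 1) = t (i + 2)) :
    ∃ k : ℤ, α + β = (k : ℝ) := by
  have hαi : Irrational (tlα 0) := by rw [htlα0]; exact hα
  have hβi : Irrational (tlβ 0) := by rw [htlβ0]; exact hβ
  have haα1 : ∀ r, 1 ≤ aα (r + 1) := by
    intro r; rw [haα]; exact Int.le_floor.mpr (by exact_mod_cast (my_gt_one hαi htlα r).le)
  have haβ1 : ∀ r, 1 ≤ aβ (r + 1) := by
    intro r; rw [haβ]; exact Int.le_floor.mpr (by exact_mod_cast (my_gt_one hβi htlβ r).le)
  have qp := my_q_pos haα1 hq0 hq1 hqrec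
  have tp := my_q_pos haβ1 ht0 ht1 htrec
  -- t 1 = 1 and aα 2 = aβ 3
  have e10 := hqrec 0
  have e2 := htrec 1
  have h0 := h 0
  have h1' := h 1
  have key : (aα 2 - aβ 3) * t 2 = t 1 - 1 := by
    linear_combination -e10 - aα 2 * h0 + h1' + e2 - hq0
  have ht2gt : t 1 < t 2 := my_q_lt haβ1 ht0 ht1 htrec 0
  have ht1p : 1 ≤ t 1 := tp 1
  have ht2p0 : (0:ℤ) ≤ t 2 := by linarith
  have hD : aα 2 - aβ 3 = 0 := by
    by_contra hDne
    rcases lt_or_gt_of_ne hDne with hh | hh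
    · have h' : aα 2 - aβ 3 ≤ -1 := by omega
      have := mul_le_mul_of_nonneg_right h' ht2p0
      rw [neg_one_mul] at this
      linarith
    · have h' : (1:ℤ) ≤ aα 2 - aβ 3 := hh
      have := mul_le_mul_of_nonneg_right h' ht2p0
      rw [one_mul] at this
      linarith
  have hT1one : t 1 = 1 := by rw [hD, zero_mul] at key; omega
  have hb1 : aβ 1 = 1 := by rw [← ht1]; exact hT1one
  have hb2 : aβ 2 = aα 1 - 1 := by
    have e := htrec 0
    have hh := h 0
    norm_num at e hh
    rw [hq1] at hh
    rw [hT1one, ht0] at e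
    omega
  have hbn : ∀ j, aβ (j + 3) = aα (j + 2) := by
    intro j
    cases j with
    | zero => show aβ 3 = aα 2; omega
    | succ i =>
      show aβ (i + 4) = aα (i + 3)
      have e1 := hqrec (i + 1)
      have e2' := htrec (i + 2)
      have k1 := h i
      have k2 := h (i + 1)
      have k3 := h (i + 2)
      have key2 : (aα (i + 3) - aβ (i + 4)) * q (i + 2) = 0 := by
        linear_combination -e1 + e2' + k3 - k1 - aβ (i + 4) * k2
      have := qp (i + 2)
      rcases mul_eq_zero.mp key2 with h' | h' <;> omega
  -- analytic part
  have hα1ge : 2 ≤ aα 1 := by have := haβ1 1; norm_num at this; omega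
  have hx : (2:ℝ) < tlα 1 := by
    have hfl2 : (2:ℤ) ≤ ⌊tlα 1⌋ := by rw [← haα 1]; exact hα1ge
    have h2le : ((2:ℤ):ℝ) ≤ tlα 1 := le_trans (by exact_mod_cast hfl2) (Int.floor_le _)
    have hne : tlα 1 ≠ ((2:ℤ):ℝ) := (my_irr_iter hαi htlα 1).ne_int 2
    push_cast at h2le hne
    exact lt_of_le_of_ne h2le (Ne.symm hne)
  have hfl_sub : ⌊tlα 1 - 1⌋ = ⌊tlα 1⌋ - 1 := by
    have := Int.floor_sub_intCast (tlα 1) 1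
    push_cast at this
    exact this
  set w : ℕ → ℝ := fun r => match r with
    | 0 => tlα 1 - 1
    | (r+1) => tlα (r + 2) with hw
  have hwrec : ∀ r, w (r + 1) = (w r - (⌊w r⌋ : ℝ))⁻¹ := by
    intro r
    cases r with
    | zero =>
      show tlα 2 = ((tlα 1 - 1) - (⌊tlα 1 - 1⌋ : ℝ))⁻¹
      rw [htlα 1, hfl_sub]
      push_cast
      ring_nf
    | succ r =>
      show tlα (r + 3) = (tlα (r + 2) - (⌊tlα (r + 2)⌋ : ℝ))⁻¹
      exact htlα (r + 2)
  have hwirr : Irrational (w 0) := by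
    show Irrational (tlα 1 - 1)
    have := (my_irr_iter hαi htlα 1).sub_intCast 1
    simpa using this
  have hwgt : ∀ r, 1 < w r := by
    intro r
    cases r with
    | zero => show (1:ℝ) < tlα 1 - 1; linarith
    | succ r =>
      show (1:ℝ) < tlα (r + 2)
      exact my_gt_one hαi htlα (r + 1)
  have hvgt : ∀ r, (1:ℝ) < tlβ (r + 2) := fun r => my_gt_one hβi htlβ (r + 1)
  have hflw : ∀ r, ⌊w r⌋ = ⌊tlβ (r + 2)⌋ := by
    intro r
    cases r with
    | zero =>
      show ⌊tlα 1 - 1⌋ = ⌊tlβ 2⌋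
      rw [hfl_sub, ← haα 1, ← haβ 2]
      omega
    | succ r =>
      show ⌊tlα (r + 2)⌋ = ⌊tlβ (r + 3)⌋
      rw [← haα (r + 2), ← haβ (r + 3)]
      exact (hbn r).symm
  have hveq : tlβ 2 = tlα 1 - 1 := by
    by_contra hne
    have hpos : 0 < |w 0 - tlβ 2| := by
      show 0 < |tlα 1 - 1 - tlβ 2|
      rw [abs_sub_comm]
      exact abs_pos.mpr (sub_ne_zero.mpr hne)
    obtain ⟨n, hn⟩ := exists_pow_lt_of_lt_one hpos (by norm_num : (1/2:ℝ) < 1)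
    have hb := my_cf_unique n w (fun r => tlβ (r + 2))
      hwrec (fun r => htlβ (r + 2)) hwirr (my_irr_iter hβi htlβ 2)
      hwgt hvgt hflw
    exact absurd hb (not_le.mpr hn)
  have eα : tlα 0 = (⌊tlα 0⌋ : ℝ) + (tlα 1)⁻¹ := my_u_eq hαi htlα 0
  have eβ : tlβ 0 = (⌊tlβ 0⌋ : ℝ) + (tlβ 1)⁻¹ := my_u_eq hβi htlβ 0
  have eβ1 : tlβ 1 = (⌊tlβ 1⌋ : ℝ) + (tlβ 2)⁻¹ := my_u_eq hβi htlβ 1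
  have hfb1 : ((⌊tlβ 1⌋ : ℤ) : ℝ) = 1 := by rw [← haβ 1, hb1]; norm_num
  refine ⟨aα 0 + aβ 0 + 1, ?_⟩
  have hx0 : tlα 1 ≠ 0 := by linarith
  have hx1 : tlα 1 - 1 ≠ 0 := ne_of_gt (by linarith : (0:ℝ) < tlα 1 - 1)
  have etl : tlβ 1 = 1 + (tlα 1 - 1)⁻¹ := by rw [eβ1, hfb1, hveq]
  have einv : (tlβ 1)⁻¹ = 1 - (tlα 1)⁻¹ := by
    have hposx : (0:ℝ) < tlα 1 - 1 := by linarith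
    have hne2 : (1:ℝ) + (tlα 1 - 1)⁻¹ ≠ 0 := by positivity
    rw [etl]
    field_simp
    ring
  have ca : ((aα 0 : ℤ) : ℝ) = (⌊tlα 0⌋ : ℝ) := by rw [haα 0]
  have cb : ((aβ 0 : ℤ) : ℝ) = (⌊tlβ 0⌋ : ℝ) := by rw [haβ 0]
  rw [← htlα0, ← htlβ0, eα, eβ, einv]
  push_cast
  linarith [ca, cb]
/-- Lemma 1: for irrationals `α, β` with `α ± β ∉ ℤ`, with convergent denominators
`q` and `t` respectively, only finitely many pairs `(n, m)` satisfy
`q n = t m` and `q (n+1) = t (m+1)`. -/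
theorem stmt_5 (α β : ℝ) (hα : Irrational α) (hβ : Irrational β)
    (hsum : ∀ k : ℤ, α + β ≠ (k : ℝ)) (hdiff : ∀ k : ℤ, α - β ≠ (k : ℝ))
    (tlα : ℕ → ℝ) (aα : ℕ → ℤ) (q : ℕ → ℤ)
    (htlα0 : tlα 0 = α)
    (htlα : ∀ r, tlα (r + 1) = (tlα r - (⌊tlα r⌋ : ℝ))⁻¹)
    (haα : ∀ r, aα r = ⌊tlα r⌋)
    (hq0 : q 0 = 1) (hq1 : q 1 = aα 1)
    (hqrec : ∀ k, q (k + 2) = aα (k + 2) * q (k + 1) + q k)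
    (tlβ : ℕ → ℝ) (aβ : ℕ → ℤ) (t : ℕ → ℤ)
    (htlβ0 : tlβ 0 = β)
    (htlβ : ∀ r, tlβ (r + 1) = (tlβ r - (⌊tlβ r⌋ : ℝ))⁻¹)
    (haβ : ∀ r, aβ r = ⌊tlβ r⌋)
    (ht0 : t 0 = 1) (ht1 : t 1 = aβ 1)
    (htrec : ∀ k, t (k + 2) = aβ (k + 2) * t (k + 1) + t k) :
    {p : ℕ × ℕ | q p.1 = t p.2 ∧ q (p.1 + 1) = t (p.2 + 1)}.Finite := by
  by_contra hinf
  have hSinf : {p : ℕ × ℕ | q p.1 = t p.2 ∧ q (p.1 + 1) = t (p.2 + 1)}.Infinite := hinf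
  have hαi : Irrational (tlα 0) := by rw [htlα0]; exact hα
  have hβi : Irrational (tlβ 0) := by rw [htlβ0]; exact hβ
  have haα1 : ∀ r, 1 ≤ aα (r + 1) := by
    intro r; rw [haα]; exact Int.le_floor.mpr (by exact_mod_cast (my_gt_one hαi htlα r).le)
  have haβ1 : ∀ r, 1 ≤ aβ (r + 1) := by
    intro r; rw [haβ]; exact Int.le_floor.mpr (by exact_mod_cast (my_gt_one hβi htlβ r).le)
  have qp := my_q_pos haα1 hq0 hq1 hqrec
  have tp := my_q_pos haβ1 ht0 ht1 htrec
  have tlt := my_q_lt haβ1 ht0 ht1 htrec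
  have hqge := my_q_ge haα1 hq0 hq1 hqrec
  -- t is strictly monotone on indices ≥ 1
  have tmono : ∀ i j : ℕ, i < j → t (i + 1) < t (j + 1) := by
    intro i j hij
    induction j with
    | zero => omega
    | succ j ih =>
      rcases Nat.lt_succ_iff_lt_or_eq.mp hij with h' | h'
      · exact lt_trans (ih h') (tlt j)
      · rw [h']; exact tlt j
  -- injectivity of first projection
  have hinj : Set.InjOn Prod.fst {p : ℕ × ℕ | q p.1 = t p.2 ∧ q (p.1 + 1) = t (p.2 + 1)} := by
    rintro ⟨n, m⟩ ⟨h1, h2⟩ ⟨n', m'⟩ ⟨h1', h2'⟩ (he : n = n')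
    subst he
    have heq : t (m + 1) = t (m' + 1) := by rw [← h2, ← h2']
    have hmm : m = m' := by
      by_contra hne
      rcases Nat.lt_or_ge m m' with hlt | hge
      · exact absurd heq (ne_of_lt (tmono m m' hlt))
      · have hlt : m' < m := by omega
        exact absurd heq.symm (ne_of_lt (tmono m' m hlt))
    rw [hmm]
  have himg := hSinf.image hinj
  have hub : ∀ N : ℕ, ∃ p : ℕ × ℕ, (q p.1 = t p.2 ∧ q (p.1 + 1) = t (p.2 + 1)) ∧ N < p.1 := by
    intro N
    obtain ⟨b, ⟨p, hp, rfl⟩, hb⟩ := himg.exists_gt N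
    exact ⟨p, hp, hb⟩
  -- classification of gaps
  have hcl : ∀ n m : ℕ, q n = t m → q (n + 1) = t (m + 1) → 2 ≤ n →
      (m + 1 = n ∨ m = n ∨ m = n + 1) := by
    intro n m h1 h2 hn
    by_contra hcon
    push_neg at hcon
    obtain ⟨hc1, hc2, hc3⟩ := hcon
    have hm1 : 1 ≤ m := by
      by_contra hm
      have hm0 : m = 0 := by omega
      rw [hm0, ht0] at h1
      have := hqge n
      omega
    rcases Nat.lt_or_ge n m with hlt | hge
    · have hm2 : n + 2 ≤ m := by omega
      obtain ⟨n', rfl⟩ : ∃ n', n = n' + 2 := ⟨n - 2, by omega⟩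
      obtain ⟨d, rfl⟩ : ∃ d, m = n' + 4 + d := ⟨m - (n' + 4), by omega⟩
      have hc := my_chain haα1 hq0 hq1 hqrec haβ1 ht0 ht1 htrec (n' + 1) 1 (d + 3)
        (by omega) (by omega)
        (by rw [show 1 + (n' + 1) = n' + 2 from by omega,
                show d + 3 + (n' + 1) = n' + 4 + d from by omega]; exact h1)
        (by rw [show 1 + (n' + 1) + 1 = n' + 2 + 1 from by omega,
                show d + 3 + (n' + 1) + 1 = n' + 4 + d + 1 from by omega]; exact h2)
      exact my_base haα1 hq0 hq1 hqrec haβ1 ht0 ht1 htrec d hc.1 hc.2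
    · have hn2 : m + 2 ≤ n := by omega
      obtain ⟨m', rfl⟩ : ∃ m', m = m' + 1 := ⟨m - 1, by omega⟩
      obtain ⟨d, rfl⟩ : ∃ d, n = m' + 3 + d := ⟨n - (m' + 3), by omega⟩
      have hc := my_chain haβ1 ht0 ht1 htrec haα1 hq0 hq1 hqrec m' 1 (d + 3)
        (by omega) (by omega)
        (by rw [show 1 + m' = m' + 1 from by omega,
                show d + 3 + m' = m' + 3 + d from by omega]; exact h1.symm)
        (by rw [show 1 + m' + 1 = m' + 1 + 1 from by omega,
                show d + 3 + m' + 1 = m' + 3 + d + 1 from by omega]; exact h2.symm)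
      exact my_base haβ1 ht0 ht1 htrec haα1 hq0 hq1 hqrec d hc.1 hc.2
  -- trichotomy of offsets with unbounded witnesses
  have hQ : (∀ N : ℕ, ∃ n, N ≤ n ∧ q (n + 1) = t (n + 1) ∧ q (n + 2) = t (n + 2)) ∨
            (∀ N : ℕ, ∃ n, N ≤ n ∧ q (n + 1) = t (n + 2) ∧ q (n + 2) = t (n + 3)) ∨
            (∀ N : ℕ, ∃ n, N ≤ n ∧ t (n + 1) = q (n + 2) ∧ t (n + 2) = q (n + 3)) := by
    by_contra hc
    push_neg at hc
    obtain ⟨hA, hB, hC⟩ := hc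
    obtain ⟨N0, hN0⟩ := hA
    obtain ⟨N1, hN1⟩ := hB
    obtain ⟨N2, hN2⟩ := hC
    obtain ⟨⟨pn, pm⟩, ⟨hp1, hp2⟩, hplarge⟩ := hub (N0 + N1 + N2 + 3)
    simp only at hp1 hp2 hplarge
    have hcls := hcl pn pm hp1 hp2 (by omega)
    rcases hcls with hc1 | hc1 | hc1
    · obtain ⟨n, rfl⟩ : ∃ n, pm = n + 1 := ⟨pm - 1, by omega⟩
      have hpn : pn = n + 2 := by omega
      subst hpn
      exact hN2 n (by omega) hp1.symm hp2.symm
    · obtain ⟨n, rfl⟩ : ∃ n, pn = n + 1 := ⟨pn - 1, by omega⟩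
      have hpm : pm = n + 1 := by omega
      subst hpm
      exact hN0 n (by omega) hp1 hp2
    · obtain ⟨n, rfl⟩ : ∃ n, pn = n + 1 := ⟨pn - 1, by omega⟩
      have hpm : pm = n + 2 := by omega
      subst hpm
      exact hN1 n (by omega) hp1 hp2
  rcases hQ with hA | hB | hC
  · have hall : ∀ i, q (i + 1) = t (i + 1) := by
      intro i
      obtain ⟨n, hni, e1, e2⟩ := hA i
      obtain ⟨k, rfl⟩ : ∃ k, n = i + k := ⟨n - i, by omega⟩
      have hc := my_chain haα1 hq0 hq1 hqrec haβ1 ht0 ht1 htrec k (i + 1) (i + 1)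
        (by omega) (by omega)
        (by rw [show i + 1 + k = i + k + 1 from by omega]; exact e1)
        (by rw [show i + 1 + k + 1 = i + k + 2 from by omega]; exact e2)
      exact hc.1
    obtain ⟨k, hk⟩ := my_caseA α β hα hβ tlα aα q htlα0 htlα haα hq0 hq1 hqrec
      tlβ aβ t htlβ0 htlβ haβ ht0 ht1 htrec hall
    exact hdiff k hk
  · have hall : ∀ i, q (i + 1) = t (i + 2) := by
      intro i
      obtain ⟨n, hni, e1, e2⟩ := hB i
      obtain ⟨k, rfl⟩ : ∃ k, n = i + k := ⟨n - i, by omega⟩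
      have hc := my_chain haα1 hq0 hq1 hqrec haβ1 ht0 ht1 htrec k (i + 1) (i + 2)
        (by omega) (by omega)
        (by rw [show i + 1 + k = i + k + 1 from by omega,
                show i + 2 + k = i + k + 2 from by omega]; exact e1)
        (by rw [show i + 1 + k + 1 = i + k + 2 from by omega,
                show i + 2 + k + 1 = i + k + 3 from by omega]; exact e2)
      exact hc.1
    obtain ⟨k, hk⟩ := my_caseB α β hα hβ tlα aα q htlα0 htlα haα hq0 hq1 hqrec
      tlβ aβ t htlβ0 htlβ haβ ht0 ht1 htrec hall
    exact hsum k hk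
  · have hall : ∀ i, t (i + 1) = q (i + 2) := by
      intro i
      obtain ⟨n, hni, e1, e2⟩ := hC i
      obtain ⟨k, rfl⟩ : ∃ k, n = i + k := ⟨n - i, by omega⟩
      have hc := my_chain haβ1 ht0 ht1 htrec haα1 hq0 hq1 hqrec k (i + 1) (i + 2)
        (by omega) (by omega)
        (by rw [show i + 1 + k = i + k + 1 from by omega,
                show i + 2 + k = i + k + 2 from by omega]; exact e1)
        (by rw [show i + 1 + k + 1 = i + k + 2 from by omega,
                show i + 2 + k + 1 = i + k + 3 from by omega]; exact e2)
      exact hc.1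
    obtain ⟨k, hk⟩ := my_caseB β α hβ hα tlβ aβ t htlβ0 htlβ haβ ht0 ht1 htrec
      tlα aα q htlα0 htlα haα hq0 hq1 hqrec hall
    exact hsum k (by rw [← hk]; ring)
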